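/- arXiv:1712.06587 — 3 statements merged into one kernel-verified Lean document; each statement's English description precedes it below -/
import Mathlib

section
/- Asymmetric Lovász local lemma: let A₁,…,A_N be events with dependency graph G (each A_i is mutually independent of the collection of its non-neighbors in G). If there is a function x : {A₁,…,A_N} → [0,1) with Pr(A_i) ≤ x(A_i) · Π_{B ∈ Γ(A_i)} (1 − x(B)) for all i, then Pr(⋂_i A_iᶜ) > 0. -/
open MeasureTheory ProbabilityTheory

/-- Asymmetric Lovász local lemma.  `G` is a dependency graph for the events `A i`:
each `A i` is independent of the sigma-algebra generated by its non-neighbors.  If there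
is a weight function `x : Fin N → [0,1)` with
`Pr(A i) ≤ x i * ∏_{j ∈ Γ(i)} (1 - x j)` for all `i`, then `Pr(⋂ i, (A i)ᶜ) > 0`. -/
theorem asymmetric_lovasz_local_lemma {Ω : Type*} [MeasurableSpace Ω]
    (μ : Measure Ω) [IsProbabilityMeasure μ] (N : ℕ)
    (A : Fin N → Set Ω) (hA : ∀ i, MeasurableSet (A i))
    (G : SimpleGraph (Fin N)) [DecidableRel G.Adj]
    (hindep : ∀ i : Fin N,
      Indep (MeasurableSpace.generateFrom {A i})
        (MeasurableSpace.generateFrom (A '' {j | j ≠ i ∧ ¬ G.Adj i j})) μ)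
    (x : Fin N → ℝ) (hx0 : ∀ i, 0 ≤ x i) (hx1 : ∀ i, x i < 1)
    (hbound : ∀ i, μ (A i) ≤
      ENNReal.ofReal (x i * ∏ j ∈ G.neighborFinset i, (1 - x j))) :
    0 < μ (⋂ i, (A i)ᶜ) := by
  classical
  set C : Finset (Fin N) → Set Ω := fun S => ⋂ j ∈ S, (A j)ᶜ with hCdef
  have h0 : ∀ j, 0 ≤ 1 - x j := fun j => by linarith [hx1 j]
  have hprod_nonneg : ∀ T : Finset (Fin N), 0 ≤ ∏ j ∈ T, (1 - x j) :=
    fun T => Finset.prod_nonneg fun j _ => h0 j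
  have hprod_le_one : ∀ T : Finset (Fin N), ∏ j ∈ T, (1 - x j) ≤ 1 :=
    fun T => Finset.prod_le_one (fun j _ => h0 j) (fun j _ => by linarith [hx0 j])
  -- independence consequence
  have hindep' : ∀ i (S : Finset (Fin N)), (∀ j ∈ S, j ≠ i ∧ ¬ G.Adj i j) →
      μ (A i ∩ C S) = μ (A i) * μ (C S) := by
    intro i S hS
    have h1 : MeasurableSet[MeasurableSpace.generateFrom {A i}] (A i) :=
      MeasurableSpace.measurableSet_generateFrom rfl
    have h2 : MeasurableSet[MeasurableSpace.generateFrom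
        (A '' {j | j ≠ i ∧ ¬ G.Adj i j})] (C S) := by
      apply MeasurableSet.biInter S.countable_toSet
      intro j hj
      exact (MeasurableSpace.measurableSet_generateFrom
        (Set.mem_image_of_mem A (show j ∈ {k | k ≠ i ∧ ¬ G.Adj i k} from hS j hj))).compl
    exact (Indep_iff _ _ μ).mp (hindep i) _ _ h1 h2
  -- cancellation step
  have cancel : ∀ (j : Fin N) (U : Finset (Fin N)),
      μ (A j ∩ C U) ≤ ENNReal.ofReal (x j) * μ (C U) →
      ENNReal.ofReal (1 - x j) * μ (C U) ≤ μ ((A j)ᶜ ∩ C U) := by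
    intro j U h
    have hsplit : μ (A j ∩ C U) + μ ((A j)ᶜ ∩ C U) = μ (C U) := by
      rw [Set.inter_comm (A j), Set.inter_comm (A j)ᶜ, ← Set.diff_eq]
      exact measure_inter_add_diff (C U) (hA j)
    have hfin : μ (A j ∩ C U) ≠ ⊤ := measure_ne_top μ _
    rw [← ENNReal.add_le_add_iff_left hfin]
    calc μ (A j ∩ C U) + ENNReal.ofReal (1 - x j) * μ (C U)
        ≤ ENNReal.ofReal (x j) * μ (C U) + ENNReal.ofReal (1 - x j) * μ (C U) :=
          add_le_add_left h _
      _ = μ (C U) := by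
          rw [← add_mul, ← ENNReal.ofReal_add (hx0 j) (h0 j)]
          simp
      _ = μ (A j ∩ C U) + μ ((A j)ᶜ ∩ C U) := hsplit.symm
  -- the key conditional bound, by strong induction on the cardinality
  have key : ∀ (n : ℕ) (S : Finset (Fin N)), S.card ≤ n → ∀ i ∉ S,
      μ (A i ∩ C S) ≤ ENNReal.ofReal (x i) * μ (C S) := by
    intro n
    induction n using Nat.strong_induction_on with
    | _ n IH =>
      intro S hScard i hiS
      set S₁ : Finset (Fin N) := S.filter (fun j => G.Adj i j) with hS₁def
      set S₂ : Finset (Fin N) := S.filter (fun j => ¬ G.Adj i j) with hS₂def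
      have hunion : S₁ ∪ S₂ = S := Finset.filter_union_filter_not_eq _ S
      have hS₂prop : ∀ j ∈ S₂, j ≠ i ∧ ¬ G.Adj i j := by
        intro j hj
        rw [hS₂def, Finset.mem_filter] at hj
        exact ⟨fun h => hiS (h ▸ hj.1), hj.2⟩
      have hxiPΓ : x i * ∏ j ∈ G.neighborFinset i, (1 - x j) ≤ x i := by
        nlinarith [hprod_le_one (G.neighborFinset i),
          hprod_nonneg (G.neighborFinset i), hx0 i]
      by_cases hS₁e : S₁ = ∅
      · have hSS₂ : S = S₂ := by
          rw [← hunion, hS₁e, Finset.empty_union]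
        rw [hSS₂, hindep' i S₂ (fun j hj => hS₂prop j hj)]
        calc μ (A i) * μ (C S₂)
            ≤ ENNReal.ofReal (x i * ∏ j ∈ G.neighborFinset i, (1 - x j)) * μ (C S₂) :=
              mul_le_mul_left (hbound i) _
          _ ≤ ENNReal.ofReal (x i) * μ (C S₂) :=
              mul_le_mul_left (ENNReal.ofReal_le_ofReal hxiPΓ) _
      · -- S₁ nonempty
        have hS₁sub : S₁ ⊆ G.neighborFinset i := by
          intro j hj
          rw [hS₁def, Finset.mem_filter] at hj
          exact (G.mem_neighborFinset i j).mpr hj.2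
        -- peeling the neighbors
        have peel : ∀ T : Finset (Fin N), T ⊆ S₁ →
            (∏ j ∈ T, ENNReal.ofReal (1 - x j)) * μ (C S₂) ≤ μ (C (S₂ ∪ T)) := by
          intro T
          induction T using Finset.induction_on with
          | empty => intro _; simp
          | @insert j T hjT IHT =>
            intro hsub
            have hjS₁ : j ∈ S₁ := hsub (Finset.mem_insert_self j T)
            have hTsub : T ⊆ S₁ := fun a ha => hsub (Finset.mem_insert_of_mem ha)
            have hjAdj : G.Adj i j := (Finset.mem_filter.mp hjS₁).2
            have hjS : j ∈ S := (Finset.mem_filter.mp hjS₁).1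
            have hjU : j ∉ S₂ ∪ T := by
              simp only [Finset.mem_union]
              rintro (h | h)
              · exact (Finset.mem_filter.mp h).2 hjAdj
              · exact hjT h
            have hUsub : S₂ ∪ T ⊆ S := by
              apply Finset.union_subset (Finset.filter_subset _ S)
              exact hTsub.trans (Finset.filter_subset _ S)
            have hcard : (S₂ ∪ T).card < n := by
              have hss : S₂ ∪ T ⊂ S :=
                Finset.ssubset_iff_of_subset hUsub |>.mpr ⟨j, hjS, hjU⟩
              exact lt_of_lt_of_le (Finset.card_lt_card hss) hScard
            have hbnd := IH _ hcard (S₂ ∪ T) le_rfl j hjU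
            have hstep := cancel j (S₂ ∪ T) hbnd
            have hCeq : C (S₂ ∪ insert j T) = (A j)ᶜ ∩ C (S₂ ∪ T) := by
              rw [Finset.union_insert]
              show (⋂ k ∈ insert j (S₂ ∪ T), (A k)ᶜ) = (A j)ᶜ ∩ ⋂ k ∈ S₂ ∪ T, (A k)ᶜ
              exact Finset.set_biInter_insert _ _ _
            rw [hCeq, Finset.prod_insert hjT, mul_assoc]
            calc ENNReal.ofReal (1 - x j) * ((∏ k ∈ T, ENNReal.ofReal (1 - x k)) * μ (C S₂))
                ≤ ENNReal.ofReal (1 - x j) * μ (C (S₂ ∪ T)) :=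
                  mul_le_mul_right (IHT hTsub) _
              _ ≤ μ ((A j)ᶜ ∩ C (S₂ ∪ T)) := hstep
        have hpeel := peel S₁ le_rfl
        rw [show S₂ ∪ S₁ = S from by rw [Finset.union_comm]; exact hunion] at hpeel
        -- product comparison
        have hPle : ∏ j ∈ G.neighborFinset i, (1 - x j) ≤ ∏ j ∈ S₁, (1 - x j) := by
          rw [← Finset.prod_sdiff hS₁sub]
          have := hprod_le_one (G.neighborFinset i \ S₁)
          nlinarith [hprod_nonneg S₁, hprod_nonneg (G.neighborFinset i \ S₁)]
        have hCS₂ : C S ⊆ C S₂ := by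
          intro ω hω
          simp only [hCdef, Set.mem_iInter] at hω ⊢
          exact fun j hj => hω j (Finset.filter_subset _ S hj)
        have h1 : μ (A i ∩ C S) ≤ μ (A i ∩ C S₂) :=
          measure_mono (Set.inter_subset_inter_right _ hCS₂)
        have h2 : μ (A i ∩ C S₂) = μ (A i) * μ (C S₂) := hindep' i S₂ hS₂prop
        calc μ (A i ∩ C S) ≤ μ (A i) * μ (C S₂) := h1.trans_eq h2
          _ ≤ ENNReal.ofReal (x i * ∏ j ∈ G.neighborFinset i, (1 - x j)) * μ (C S₂) :=
              mul_le_mul_left (hbound i) _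
          _ = ENNReal.ofReal (x i) *
                (ENNReal.ofReal (∏ j ∈ G.neighborFinset i, (1 - x j)) * μ (C S₂)) := by
              rw [ENNReal.ofReal_mul (hx0 i), mul_assoc]
          _ ≤ ENNReal.ofReal (x i) *
                (ENNReal.ofReal (∏ j ∈ S₁, (1 - x j)) * μ (C S₂)) :=
              mul_le_mul_right (mul_le_mul_left (ENNReal.ofReal_le_ofReal hPle) _) _
          _ = ENNReal.ofReal (x i) *
                ((∏ j ∈ S₁, ENNReal.ofReal (1 - x j)) * μ (C S₂)) := by
              rw [ENNReal.ofReal_prod_of_nonneg (fun j _ => h0 j)]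
          _ ≤ ENNReal.ofReal (x i) * μ (C S) := mul_le_mul_right hpeel _
  -- lower bound for μ (C S)
  have lower : ∀ S : Finset (Fin N),
      ENNReal.ofReal (∏ j ∈ S, (1 - x j)) ≤ μ (C S) := by
    intro S
    induction S using Finset.induction_on with
    | empty => simp [hCdef]
    | @insert j T hjT IHT =>
      have hCeq : C (insert j T) = (A j)ᶜ ∩ C T := by
        show (⋂ k ∈ insert j T, (A k)ᶜ) = (A j)ᶜ ∩ ⋂ k ∈ T, (A k)ᶜ
        exact Finset.set_biInter_insert _ _ _
      have hbnd := key T.card T le_rfl j hjT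
      have hstep := cancel j T hbnd
      rw [hCeq, Finset.prod_insert hjT,
        ENNReal.ofReal_mul (h0 j)]
      calc ENNReal.ofReal (1 - x j) * ENNReal.ofReal (∏ k ∈ T, (1 - x k))
          ≤ ENNReal.ofReal (1 - x j) * μ (C T) := mul_le_mul_right IHT _
        _ ≤ μ ((A j)ᶜ ∩ C T) := hstep
  have hfinal := lower Finset.univ
  have hEq : (⋂ i, (A i)ᶜ) = C Finset.univ := by
    rw [hCdef]; simp
  rw [hEq]
  refine lt_of_lt_of_le ?_ hfinal
  apply ENNReal.ofReal_pos.mpr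
  exact Finset.prod_pos fun j _ => by linarith [hx1 j]
end

section
/- Symmetric Lovász local lemma: if events A₁,…,A_N each have probability at most p, each A_i is mutually independent of all but at most d of the other events, and e·p·(d+1) ≤ 1, then Pr(⋂_i A_iᶜ) > 0. -/
open MeasureTheory ProbabilityTheory

private lemma lll_step_aux {Ω : Type*} [MeasurableSpace Ω] (μ : Measure Ω)
    [IsProbabilityMeasure μ] {B D : Set Ω} (hB : MeasurableSet B)
    {x : ℝ} (hx0 : 0 ≤ x) (hx1 : x ≤ 1)
    (h : μ (B ∩ D) ≤ ENNReal.ofReal x * μ D) :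
    ENNReal.ofReal (1 - x) * μ D ≤ μ (Bᶜ ∩ D) := by
  have hadd : μ (D ∩ B) + μ (D \ B) = μ D := measure_inter_add_diff D hB
  have hBD : μ (D ∩ B) = μ (B ∩ D) := by rw [Set.inter_comm]
  have hcompl : Bᶜ ∩ D = D \ B := by rw [Set.diff_eq, Set.inter_comm]
  have hsub : μ (D \ B) = μ D - μ (D ∩ B) :=
    ENNReal.eq_sub_of_add_eq (measure_ne_top μ _) (by rw [add_comm]; exact hadd)
  rw [hcompl, hsub]
  apply ENNReal.le_sub_of_add_le_right (measure_ne_top μ _)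
  have h1 : ENNReal.ofReal (1 - x) * μ D + ENNReal.ofReal x * μ D = μ D := by
    rw [← add_mul, ← ENNReal.ofReal_add (by linarith) hx0]
    norm_num
  calc ENNReal.ofReal (1 - x) * μ D + μ (D ∩ B)
      ≤ ENNReal.ofReal (1 - x) * μ D + ENNReal.ofReal x * μ D := by
        rw [hBD]; exact add_le_add_right h _
    _ = μ D := h1

private lemma lll_real_ineq (p : ℝ) (d : ℕ)
    (hcond : Real.exp 1 * p * (d + 1) ≤ 1) :
    p ≤ (1 / ((d : ℝ) + 2)) * (1 - 1 / ((d : ℝ) + 2)) ^ d := by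
  have hd1 : (0:ℝ) < (d:ℝ) + 1 := by positivity
  have hd2 : (0:ℝ) < (d:ℝ) + 2 := by positivity
  have h1x : 1 - 1 / ((d:ℝ) + 2) = ((d:ℝ) + 1) / ((d:ℝ) + 2) := by
    rw [one_sub_div hd2.ne']
    congr 1
    ring
  have he : (0:ℝ) < Real.exp 1 := Real.exp_pos 1
  rw [h1x]
  rcases le_or_gt p 0 with hp0 | hp0
  · exact le_trans hp0 (by positivity)
  have hexp : ((d:ℝ) + 2) / ((d:ℝ) + 1) ≤ Real.exp (1 / ((d:ℝ) + 1)) := by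
    have h := Real.add_one_le_exp (1 / ((d:ℝ) + 1))
    calc ((d:ℝ) + 2) / ((d:ℝ) + 1) = 1 / ((d:ℝ) + 1) + 1 := by field_simp; ring
      _ ≤ Real.exp (1 / ((d:ℝ) + 1)) := h
  have hr : (((d:ℝ) + 2) / ((d:ℝ) + 1)) ^ (d + 1) ≤ Real.exp 1 := by
    calc (((d:ℝ) + 2) / ((d:ℝ) + 1)) ^ (d + 1)
        ≤ (Real.exp (1 / ((d:ℝ) + 1))) ^ (d + 1) :=
          pow_le_pow_left₀ (by positivity) hexp _
      _ = Real.exp 1 := by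
          rw [← Real.exp_nat_mul]
          congr 1
          push_cast
          field_simp
  have hba : ((d:ℝ) + 2) ^ (d + 1) ≤ Real.exp 1 * ((d:ℝ) + 1) ^ (d + 1) := by
    rw [div_pow, div_le_iff₀ (by positivity)] at hr
    linarith
  have key : p * ((d:ℝ) + 2) ^ (d + 1) ≤ ((d:ℝ) + 1) ^ d := by
    calc p * ((d:ℝ) + 2) ^ (d + 1)
        ≤ p * (Real.exp 1 * ((d:ℝ) + 1) ^ (d + 1)) :=
          mul_le_mul_of_nonneg_left hba hp0.le
      _ = (Real.exp 1 * p * ((d:ℝ) + 1)) * ((d:ℝ) + 1) ^ d := by rw [pow_succ]; ring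
      _ ≤ 1 * ((d:ℝ) + 1) ^ d := mul_le_mul_of_nonneg_right hcond (by positivity)
      _ = ((d:ℝ) + 1) ^ d := one_mul _
  have heq : (1 / ((d:ℝ) + 2)) * (((d:ℝ) + 1) / ((d:ℝ) + 2)) ^ d
      = ((d:ℝ) + 1) ^ d / ((d:ℝ) + 2) ^ (d + 1) := by
    rw [div_pow, pow_succ]
    field_simp
  rw [heq, le_div_iff₀ (by positivity)]
  exact key

/-- Symmetric Lovász local lemma: if each event has probability at most `p`, each event is
mutually independent of all but at most `d` of the other events, and `e * p * (d+1) ≤ 1`,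
then with positive probability none of the events occurs. -/
theorem symmetric_lovasz_local_lemma {Ω : Type*} [MeasurableSpace Ω]
    (μ : Measure Ω) [IsProbabilityMeasure μ] (N : ℕ)
    (A : Fin N → Set Ω) (hA : ∀ i, MeasurableSet (A i))
    (p : ℝ) (d : ℕ)
    (hp : ∀ i, μ (A i) ≤ ENNReal.ofReal p)
    (hindep : ∀ i : Fin N, ∃ T : Finset (Fin N), T.card ≤ d ∧ i ∉ T ∧
      Indep (MeasurableSpace.generateFrom {A i})
        (MeasurableSpace.generateFrom (A '' {j | j ≠ i ∧ j ∉ T})) μ)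
    (hcond : Real.exp 1 * p * (d + 1) ≤ 1) :
    0 < μ (⋂ i, (A i)ᶜ) := by
  set x : ℝ := 1 / ((d:ℝ) + 2) with hxdef
  have hd2 : (0:ℝ) < (d:ℝ) + 2 := by positivity
  have hx0 : 0 < x := by positivity
  have hx1 : x < 1 := by
    rw [hxdef, div_lt_one hd2]; linarith
  have h1x0 : 0 < 1 - x := by linarith
  have hpx : p ≤ x * (1 - x) ^ d := lll_real_ineq p d hcond
  -- the key conditional bound, by strong induction on the cardinality bound
  have key : ∀ n : ℕ, ∀ S : Finset (Fin N), S.card ≤ n → ∀ i, i ∉ S →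
      μ (A i ∩ ⋂ j ∈ S, (A j)ᶜ) ≤ ENNReal.ofReal x * μ (⋂ j ∈ S, (A j)ᶜ) := by
    intro n
    induction n using Nat.strong_induction_on with
    | _ n ih =>
    intro S hScard i hiS
    obtain ⟨T, hTcard, hiT, hTindep⟩ := hindep i
    set S₂ : Finset (Fin N) := S \ T with hS2def
    have hS2sub : S₂ ⊆ S := Finset.sdiff_subset
    -- independence step
    have hmeas2 : MeasurableSet[MeasurableSpace.generateFrom (A '' {j | j ≠ i ∧ j ∉ T})]
        (⋂ j ∈ S₂, (A j)ᶜ) := by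
      refine MeasurableSet.biInter (S₂ : Set (Fin N)).to_countable (fun j hj => ?_)
      have hj' : j ∈ S₂ := hj
      rw [hS2def, Finset.mem_sdiff] at hj'
      refine MeasurableSet.compl ?_
      exact MeasurableSpace.measurableSet_generateFrom
        ⟨j, ⟨fun hji => hiS (hji ▸ hj'.1), hj'.2⟩, rfl⟩
    have hindA : μ (A i ∩ ⋂ j ∈ S₂, (A j)ᶜ) = μ (A i) * μ (⋂ j ∈ S₂, (A j)ᶜ) :=
      ((Indep_iff _ _ _).1 hTindep) _ _
        (MeasurableSpace.measurableSet_generateFrom rfl) hmeas2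
    -- peeling lemma
    have peel : ∀ V : Finset (Fin N), V ⊆ S ∩ T →
        ENNReal.ofReal ((1 - x) ^ V.card) * μ (⋂ j ∈ S₂, (A j)ᶜ)
          ≤ μ (⋂ j ∈ S₂ ∪ V, (A j)ᶜ) := by
      intro V
      induction V using Finset.induction_on with
      | empty => intro _; simp
      | @insert a V haV ihV =>
        intro hsub
        have haST : a ∈ S ∩ T := hsub (Finset.mem_insert_self a V)
        have haS : a ∈ S := (Finset.mem_inter.1 haST).1
        have haT : a ∈ T := (Finset.mem_inter.1 haST).2
        have hVsub : V ⊆ S ∩ T := fun y hy => hsub (Finset.mem_insert_of_mem hy)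
        have haU : a ∉ S₂ ∪ V := by
          rw [Finset.mem_union, hS2def, Finset.mem_sdiff]
          rintro (⟨-, h⟩ | h)
          · exact h haT
          · exact haV h
        have hUS : S₂ ∪ V ⊆ S := by
          refine Finset.union_subset hS2sub (fun y hy => (Finset.mem_inter.1 (hVsub hy)).1)
        have hUlt : (S₂ ∪ V).card < n := by
          have h1 : (S₂ ∪ V).card < S.card :=
            Finset.card_lt_card ((Finset.ssubset_iff_of_subset hUS).2 ⟨a, haS, haU⟩)
          exact lt_of_lt_of_le h1 hScard
        have hstep := ih _ hUlt (S₂ ∪ V) le_rfl a haU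
        have hDset : (⋂ j ∈ S₂ ∪ insert a V, (A j)ᶜ)
            = (A a)ᶜ ∩ ⋂ j ∈ S₂ ∪ V, (A j)ᶜ := by
          rw [Finset.union_insert, Finset.set_biInter_insert]
        have hmain : ENNReal.ofReal (1 - x) * μ (⋂ j ∈ S₂ ∪ V, (A j)ᶜ)
            ≤ μ ((A a)ᶜ ∩ ⋂ j ∈ S₂ ∪ V, (A j)ᶜ) :=
          lll_step_aux μ (hA a) hx0.le hx1.le hstep
        rw [hDset]
        calc ENNReal.ofReal ((1 - x) ^ (insert a V).card) * μ (⋂ j ∈ S₂, (A j)ᶜ)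
            = ENNReal.ofReal (1 - x) *
              (ENNReal.ofReal ((1 - x) ^ V.card) * μ (⋂ j ∈ S₂, (A j)ᶜ)) := by
              rw [Finset.card_insert_of_notMem haV, pow_succ,
                ENNReal.ofReal_mul (by positivity), ← mul_assoc, mul_comm
                (ENNReal.ofReal ((1 - x) ^ V.card)) (ENNReal.ofReal (1 - x)), mul_assoc]
          _ ≤ ENNReal.ofReal (1 - x) * μ (⋂ j ∈ S₂ ∪ V, (A j)ᶜ) :=
              mul_le_mul_right (ihV hVsub) _
          _ ≤ μ ((A a)ᶜ ∩ ⋂ j ∈ S₂ ∪ V, (A j)ᶜ) := hmain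
    have hunion : S₂ ∪ (S ∩ T) = S := by
      rw [hS2def]
      ext y
      simp only [Finset.mem_union, Finset.mem_sdiff, Finset.mem_inter]
      tauto
    have hC : ENNReal.ofReal ((1 - x) ^ d) * μ (⋂ j ∈ S₂, (A j)ᶜ)
        ≤ μ (⋂ j ∈ S, (A j)ᶜ) := by
      have h1 := peel (S ∩ T) (subset_refl _)
      rw [hunion] at h1
      refine le_trans (mul_le_mul_left ?_ _) h1
      refine ENNReal.ofReal_le_ofReal ?_
      refine pow_le_pow_of_le_one h1x0.le (by linarith) ?_
      exact le_trans (Finset.card_le_card Finset.inter_subset_right) hTcard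
    have hmono : (⋂ j ∈ S, (A j)ᶜ) ⊆ ⋂ j ∈ S₂, (A j)ᶜ := by
      exact Set.biInter_subset_biInter_left (fun y hy => hS2sub hy)
    calc μ (A i ∩ ⋂ j ∈ S, (A j)ᶜ)
        ≤ μ (A i ∩ ⋂ j ∈ S₂, (A j)ᶜ) :=
          measure_mono (Set.inter_subset_inter_right _ hmono)
      _ = μ (A i) * μ (⋂ j ∈ S₂, (A j)ᶜ) := hindA
      _ ≤ ENNReal.ofReal p * μ (⋂ j ∈ S₂, (A j)ᶜ) := mul_le_mul_left (hp i) _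
      _ ≤ ENNReal.ofReal (x * (1 - x) ^ d) * μ (⋂ j ∈ S₂, (A j)ᶜ) :=
          mul_le_mul_left (ENNReal.ofReal_le_ofReal hpx) _
      _ = ENNReal.ofReal x * (ENNReal.ofReal ((1 - x) ^ d) * μ (⋂ j ∈ S₂, (A j)ᶜ)) := by
          rw [← mul_assoc, ← ENNReal.ofReal_mul hx0.le]
      _ ≤ ENNReal.ofReal x * μ (⋂ j ∈ S, (A j)ᶜ) := mul_le_mul_right hC _
  -- lower bound on the probability that none of the events in S occurs
  have lb : ∀ S : Finset (Fin N),
      ENNReal.ofReal ((1 - x) ^ S.card) ≤ μ (⋂ j ∈ S, (A j)ᶜ) := by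
    intro S
    induction S using Finset.induction_on with
    | empty => simp
    | @insert a S' haS' ihS =>
      have hstep := key S'.card S' le_rfl a haS'
      have hmain : ENNReal.ofReal (1 - x) * μ (⋂ j ∈ S', (A j)ᶜ)
          ≤ μ ((A a)ᶜ ∩ ⋂ j ∈ S', (A j)ᶜ) :=
        lll_step_aux μ (hA a) hx0.le hx1.le hstep
      rw [Finset.set_biInter_insert]
      calc ENNReal.ofReal ((1 - x) ^ (insert a S').card)
          = ENNReal.ofReal (1 - x) * ENNReal.ofReal ((1 - x) ^ S'.card) := by
            rw [Finset.card_insert_of_notMem haS', pow_succ,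
              ENNReal.ofReal_mul (by positivity), mul_comm]
        _ ≤ ENNReal.ofReal (1 - x) * μ (⋂ j ∈ S', (A j)ᶜ) := mul_le_mul_right ihS _
        _ ≤ μ ((A a)ᶜ ∩ ⋂ j ∈ S', (A j)ᶜ) := hmain
  have hfinal := lb Finset.univ
  have hcardN : (Finset.univ : Finset (Fin N)).card = N := by simp
  have hposr : (0:ℝ) < (1 - x) ^ N := pow_pos h1x0 N
  have hiInter : (⋂ j ∈ (Finset.univ : Finset (Fin N)), (A j)ᶜ) = ⋂ i, (A i)ᶜ := by
    simp
  calc (0 : ENNReal) < ENNReal.ofReal ((1 - x) ^ N) := ENNReal.ofReal_pos.2 hposr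
    _ = ENNReal.ofReal ((1 - x) ^ (Finset.univ : Finset (Fin N)).card) := by rw [hcardN]
    _ ≤ μ (⋂ j ∈ (Finset.univ : Finset (Fin N)), (A j)ᶜ) := hfinal
    _ = μ (⋂ i, (A i)ᶜ) := by rw [hiInter]
end

section
/- Let S = C₁ ∨ ⋯ ∨ C_N be a DNF in which every clause has exactly m literals on distinct variables, and each clause shares a variable with at most d other clauses. If e·(d+1) ≤ 2^m, then S is not a tautology. -/
open Finset

namespace LLLaux

variable {n N : ℕ}

def sat (C : Fin N → Finset (Fin n × Bool)) (k : Fin N) (a : Fin n → Bool) : Prop :=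
  ∀ l ∈ C k, a l.1 = l.2

noncomputable instance satDec (C : Fin N → Finset (Fin n × Bool)) (k : Fin N) :
    DecidablePred (sat C k) := fun _ => Classical.propDecidable _

open Classical in
noncomputable def B (C : Fin N → Finset (Fin n × Bool)) (T : Finset (Fin N)) :
    Finset (Fin n → Bool) :=
  Finset.univ.filter (fun a => ∀ j ∈ T, ¬ sat C j a)

lemma mem_B {C : Fin N → Finset (Fin n × Bool)} {T : Finset (Fin N)} {a : Fin n → Bool} :
    a ∈ B C T ↔ ∀ j ∈ T, ¬ sat C j a := by
  classical
  simp [B]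

lemma sat_congr {C : Fin N → Finset (Fin n × Bool)} {j : Fin N} {a b : Fin n → Bool}
    (h : ∀ l ∈ C j, a l.1 = b l.1) : sat C j a ↔ sat C j b := by
  unfold sat
  constructor <;> intro hs l hl
  · rw [← h l hl]; exact hs l hl
  · rw [h l hl]; exact hs l hl

lemma card_agree (V : Finset (Fin n)) (b : Fin n → Bool) :
    (Finset.univ.filter (fun a : Fin n → Bool => ∀ i ∉ V, a i = b i)).card = 2 ^ V.card := by
  classical
  rw [show (2:ℕ) ^ V.card = (Finset.univ : Finset (V → Bool)).card by
    simp [Finset.card_univ]]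
  refine Finset.card_bij' (fun a _ => fun v : V => a v.1)
    (fun g _ => fun i => if h : i ∈ V then g ⟨i, h⟩ else b i) ?_ ?_ ?_ ?_
  · intro a ha; exact mem_univ _
  · intro g hg
    simp only [mem_filter, mem_univ, true_and]
    intro i hi
    exact dif_neg hi
  · intro a ha
    funext i
    by_cases h : i ∈ V
    · simp [h]
    · simp only [dif_neg h]
      exact ((mem_filter.mp ha).2 i h).symm
  · intro g hg
    funext v
    simp [v.2]

lemma B_insert (C : Fin N → Finset (Fin n × Bool)) (j : Fin N) (S : Finset (Fin N)) :
    B C (insert j S) = (B C S).filter (fun a => ¬ sat C j a) := by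
  classical
  ext a
  simp only [mem_B, Finset.mem_filter, Finset.mem_insert]
  constructor
  · intro h
    exact ⟨fun i hi => h i (Or.inr hi), h j (Or.inl rfl)⟩
  · rintro ⟨h1, h2⟩ i (rfl | hi)
    · exact h2
    · exact h1 i hi

lemma B_insert_card (C : Fin N → Finset (Fin n × Bool)) (j : Fin N) (S : Finset (Fin N)) :
    ((B C (insert j S)).card : ℝ)
      = ((B C S).card : ℝ) - (((B C S).filter (sat C j)).card : ℝ) := by
  classical
  have h := Finset.card_filter_add_card_filter_not (s := B C S) (p := sat C j)
  rw [B_insert]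
  have h' : (((B C S).filter (sat C j)).card : ℝ)
      + (((B C S).filter (fun a => ¬ sat C j a)).card : ℝ) = ((B C S).card : ℝ) := by
    exact_mod_cast congrArg (fun z : ℕ => (z : ℝ)) h
  linarith

lemma indep (C : Fin N → Finset (Fin n × Bool)) (k : Fin N)
    (hdis : ∀ l₁ ∈ C k, ∀ l₂ ∈ C k, l₁.1 = l₂.1 → l₁ = l₂)
    (T₂ : Finset (Fin N))
    (hsep : ∀ j ∈ T₂, ∀ l₂ ∈ C j, ∀ l₁ ∈ C k, l₂.1 ≠ l₁.1) :
    ((B C T₂).filter (sat C k)).card * 2 ^ (C k).card = (B C T₂).card := by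
  classical
  set V : Finset (Fin n) := (C k).image Prod.fst with hV
  have hVcard : V.card = (C k).card :=
    Finset.card_image_of_injOn (fun l₁ h₁ l₂ h₂ h => hdis l₁ h₁ l₂ h₂ h)
  have hex : ∀ i ∈ V, ∃ bb : Bool, (i, bb) ∈ C k := by
    intro i hi
    rcases Finset.mem_image.mp hi with ⟨l, hl, rfl⟩
    exact ⟨l.2, hl⟩
  set val : Fin n → Bool := fun i =>
    if h : ∃ bb : Bool, (i, bb) ∈ C k then h.choose else false with hval
  have hvalmem : ∀ i ∈ V, (i, val i) ∈ C k := by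
    intro i hi
    have h := hex i hi
    simp only [hval, dif_pos h]
    exact h.choose_spec
  have hsat : ∀ a, sat C k a ↔ ∀ i ∈ V, a i = val i := by
    intro a
    constructor
    · intro hs i hi
      exact hs (i, val i) (hvalmem i hi)
    · intro h l hl
      have hlV : l.1 ∈ V := Finset.mem_image_of_mem _ hl
      have he := hdis l hl (l.1, val l.1) (hvalmem l.1 hlV) rfl
      rw [h l.1 hlV]
      rw [he]
  have hnotV : ∀ j ∈ T₂, ∀ l ∈ C j, l.1 ∉ V := by
    intro j hj l hl hlV
    rcases Finset.mem_image.mp hlV with ⟨l₁, hl₁, he⟩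
    exact hsep j hj l hl l₁ hl₁ he.symm
  have hmemB : ∀ a b : Fin n → Bool, (∀ i ∉ V, a i = b i) → (a ∈ B C T₂ ↔ b ∈ B C T₂) := by
    intro a b hab
    simp only [mem_B]
    constructor <;> intro h j hj hs
    · exact h j hj ((sat_congr (fun l hl => hab l.1 (hnotV j hj l hl))).mpr hs)
    · exact h j hj ((sat_congr (fun l hl => hab l.1 (hnotV j hj l hl))).mp hs)
  set patch : (Fin n → Bool) → (Fin n → Bool) :=
    fun a i => if i ∈ V then val i else a i with hpatch
  have hmap : ∀ a ∈ B C T₂, patch a ∈ (B C T₂).filter (sat C k) := by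
    intro a ha
    refine Finset.mem_filter.mpr ⟨?_, ?_⟩
    · exact (hmemB (patch a) a (fun i hi => if_neg hi)).mpr ha
    · exact (hsat _).mpr (fun i hi => if_pos hi)
  have hsum := Finset.card_eq_sum_card_fiberwise hmap
  have hfiber : ∀ b ∈ (B C T₂).filter (sat C k),
      ((B C T₂).filter (fun a => patch a = b)).card = 2 ^ V.card := by
    intro b hb
    rw [← card_agree V b]
    congr 1
    ext a
    simp only [Finset.mem_filter, Finset.mem_univ, true_and]
    constructor
    · rintro ⟨ha, hpb⟩ i hi
      rw [← hpb]
      simp [hpatch, hi]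
    · intro hab
      have hb' := Finset.mem_filter.mp hb
      have hbsat := (hsat b).mp hb'.2
      refine ⟨(hmemB a b hab).mpr hb'.1, ?_⟩
      funext i
      by_cases hi : i ∈ V
      · simp only [hpatch, if_pos hi]
        exact (hbsat i hi).symm
      · simp only [hpatch, if_neg hi]
        exact hab i hi
  rw [Finset.sum_congr rfl hfiber, Finset.sum_const, smul_eq_mul] at hsum
  rw [← hVcard]
  exact hsum.symm
lemma key_ineq (d m : ℕ) (hcond : Real.exp 1 * ((d : ℝ) + 1) ≤ 2 ^ m) :
    ((2:ℝ) ^ m)⁻¹ ≤ (Real.exp 1 * ((2:ℝ) ^ m)⁻¹) * (1 - Real.exp 1 * ((2:ℝ) ^ m)⁻¹) ^ d ∧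
      Real.exp 1 * ((2:ℝ) ^ m)⁻¹ < 1 ∧ 0 < Real.exp 1 * ((2:ℝ) ^ m)⁻¹ := by
  have h2 : (0:ℝ) < 2 ^ m := by positivity
  have hepos : (0:ℝ) < Real.exp 1 := Real.exp_pos 1
  have he1 : (1:ℝ) ≤ Real.exp 1 := Real.one_le_exp (by norm_num)
  have h2e : (2:ℝ) < Real.exp 1 := by
    have := Real.add_one_lt_exp (x := 1) (by norm_num)
    linarith
  have hd1 : (0:ℝ) < (d:ℝ) + 1 := by positivity
  set x : ℝ := Real.exp 1 * ((2:ℝ) ^ m)⁻¹ with hx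
  have hx0 : 0 < x := by positivity
  have hxd1 : x * ((d:ℝ) + 1) ≤ 1 := by
    have h1 : x * ((d:ℝ) + 1) = (Real.exp 1 * ((d:ℝ) + 1)) * ((2:ℝ) ^ m)⁻¹ := by ring
    rw [h1]
    calc (Real.exp 1 * ((d:ℝ) + 1)) * ((2:ℝ) ^ m)⁻¹
        ≤ (2:ℝ) ^ m * ((2:ℝ) ^ m)⁻¹ := by
          exact mul_le_mul_of_nonneg_right hcond (by positivity)
      _ = 1 := mul_inv_cancel₀ h2.ne'
  have hxle : x ≤ 1 / ((d:ℝ) + 1) := by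
    rw [le_div_iff₀ hd1]
    exact hxd1
  -- x < 1
  have hm2 : (4:ℝ) ≤ 2 ^ m := by
    have h2m : (2:ℝ) < 2 ^ m := by nlinarith
    have h1m : 1 < m := by
      by_contra hc
      push_neg at hc
      interval_cases m <;> norm_num at h2m
    have : (2:ℝ) ^ 2 ≤ 2 ^ m := pow_le_pow_right₀ (by norm_num) h1m
    norm_num at this
    linarith
  have hx1 : x < 1 := by
    rw [hx]
    have he4 : Real.exp 1 < 4 := by
      have := Real.exp_one_lt_d9
      norm_num at this ⊢
      linarith
    have : Real.exp 1 < 2 ^ m := lt_of_lt_of_le he4 hm2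
    calc Real.exp 1 * ((2:ℝ) ^ m)⁻¹ < 2 ^ m * ((2:ℝ) ^ m)⁻¹ := by
          exact mul_lt_mul_of_pos_right this (by positivity)
      _ = 1 := mul_inv_cancel₀ h2.ne'
  refine ⟨?_, hx1, hx0⟩
  -- main: p ≤ x (1-x)^d, i.e. 1 ≤ e (1-x)^d
  have hbase : (d:ℝ) / ((d:ℝ) + 1) ≤ 1 - x := by
    have h1 : 1 - 1 / ((d:ℝ) + 1) = (d:ℝ) / ((d:ℝ) + 1) := by field_simp; ring
    linarith
  have hbase0 : (0:ℝ) ≤ (d:ℝ) / ((d:ℝ) + 1) := by positivity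
  have hpow : ((d:ℝ) / ((d:ℝ) + 1)) ^ d ≤ (1 - x) ^ d := pow_le_pow_left₀ hbase0 hbase d
  have hS : 1 ≤ Real.exp 1 * ((d:ℝ) / ((d:ℝ) + 1)) ^ d := by
    rcases Nat.eq_zero_or_pos d with hd0 | hdpos
    · subst hd0; simpa using he1
    · have hd0 : (0:ℝ) < (d:ℝ) := by exact_mod_cast hdpos
      have hA : (((d:ℝ) + 1) / (d:ℝ)) ^ d ≤ Real.exp 1 := by
        have h1 : ((d:ℝ) + 1) / (d:ℝ) = 1 / (d:ℝ) + 1 := by field_simp; ring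
        have h2' : 1 / (d:ℝ) + 1 ≤ Real.exp (1 / (d:ℝ)) := Real.add_one_le_exp _
        calc (((d:ℝ) + 1) / (d:ℝ)) ^ d ≤ (Real.exp (1 / (d:ℝ))) ^ d := by
              apply pow_le_pow_left₀ (by positivity)
              rw [h1]; exact h2'
          _ = Real.exp ((d:ℕ) * (1 / (d:ℝ))) := (Real.exp_nat_mul _ d).symm
          _ = Real.exp 1 := by
              congr 1
              field_simp
      have hApos : (0:ℝ) < (((d:ℝ) + 1) / (d:ℝ)) ^ d := by positivity
      have hinv : ((d:ℝ) / ((d:ℝ) + 1)) ^ d = ((((d:ℝ) + 1) / (d:ℝ)) ^ d)⁻¹ := by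
        rw [← inv_pow]
        congr 1
        rw [inv_div]
      rw [hinv, ← div_eq_mul_inv, one_le_div hApos]
      exact hA
  have hed : Real.exp 1 * (1 - x) ^ d ≥ 1 := by
    calc Real.exp 1 * (1 - x) ^ d ≥ Real.exp 1 * ((d:ℝ) / ((d:ℝ) + 1)) ^ d :=
          mul_le_mul_of_nonneg_left hpow hepos.le
      _ ≥ 1 := hS
  calc ((2:ℝ) ^ m)⁻¹ = ((2:ℝ) ^ m)⁻¹ * 1 := (mul_one _).symm
    _ ≤ ((2:ℝ) ^ m)⁻¹ * (Real.exp 1 * (1 - x) ^ d) :=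
        mul_le_mul_of_nonneg_left hed (by positivity)
    _ = x * (1 - x) ^ d := by rw [hx]; ring
end LLLaux

open LLLaux in
/-- If every clause of a DNF has exactly `m` literals on distinct variables, every clause
shares a variable with at most `d` other clauses, and `e * (d+1) ≤ 2^m`, then the DNF is
not a tautology. -/
theorem lll_dnf_not_tautology (n N m d : ℕ) (C : Fin N → Finset (Fin n × Bool))
    (hm : ∀ k, (C k).card = m)
    (hdistinct : ∀ k, ∀ l₁ ∈ C k, ∀ l₂ ∈ C k, l₁.1 = l₂.1 → l₁ = l₂)
    (hd : ∀ i : Fin N,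
      (Finset.univ.filter (fun j : Fin N => j ≠ i ∧
        ∃ l₁ ∈ C i, ∃ l₂ ∈ C j, l₁.1 = l₂.1)).card ≤ d)
    (hcond : Real.exp 1 * ((d : ℝ) + 1) ≤ 2 ^ m) :
    ¬ ∀ a : Fin n → Bool, ∃ k : Fin N, ∀ l ∈ C k, a l.1 = l.2 := by
  classical
  intro htaut
  obtain ⟨hpx, hx1, hx0⟩ := key_ineq d m hcond
  set p : ℝ := ((2:ℝ) ^ m)⁻¹ with hpdef
  set x : ℝ := Real.exp 1 * p with hxdef
  have h2m : (0:ℝ) < 2 ^ m := by positivity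
  have hx01 : (0:ℝ) ≤ 1 - x := by linarith
  -- main LLL induction
  have key : ∀ t : ℕ, ∀ T : Finset (Fin N), T.card ≤ t → ∀ k, k ∉ T →
      (((B C T).filter (sat C k)).card : ℝ) ≤ x * ((B C T).card : ℝ) := by
    intro t
    induction t using Nat.strong_induction_on with
    | _ t ih =>
    intro T hTt k hkT
    set Γ : Finset (Fin N) :=
      T.filter (fun j => ∃ l₁ ∈ C k, ∃ l₂ ∈ C j, l₁.1 = l₂.1) with hΓdef
    set T₂ : Finset (Fin N) := T \ Γ with hT₂def
    have hΓsub : Γ ⊆ T := Finset.filter_subset _ _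
    have hT₂sub : T₂ ⊆ T := Finset.sdiff_subset
    have hunion : T₂ ∪ Γ = T := Finset.sdiff_union_of_subset hΓsub
    have hΓd : Γ.card ≤ d := by
      refine le_trans (Finset.card_le_card ?_) (hd k)
      intro j hj
      rcases Finset.mem_filter.mp hj with ⟨hjT, hsh⟩
      refine Finset.mem_filter.mpr ⟨Finset.mem_univ _, ?_, hsh⟩
      rintro rfl
      exact hkT hjT
    have hsep : ∀ j ∈ T₂, ∀ l₂ ∈ C j, ∀ l₁ ∈ C k, l₂.1 ≠ l₁.1 := by
      intro j hj l₂ hl₂ l₁ hl₁ he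
      rcases Finset.mem_sdiff.mp hj with ⟨hjT, hjΓ⟩
      exact hjΓ (Finset.mem_filter.mpr ⟨hjT, ⟨l₁, hl₁, l₂, hl₂, he.symm⟩⟩)
    have hindep := indep C k (hdistinct k) T₂ hsep
    rw [hm k] at hindep
    have hindepR : (((B C T₂).filter (sat C k)).card : ℝ) = p * ((B C T₂).card : ℝ) := by
      have hc : (((B C T₂).filter (sat C k)).card : ℝ) * (2:ℝ) ^ m
          = ((B C T₂).card : ℝ) := by exact_mod_cast hindep
      rw [hpdef, inv_mul_eq_div, eq_div_iff h2m.ne']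
      exact hc
    -- peeling
    have peel : ∀ Γ' : Finset (Fin N), Γ' ⊆ Γ →
        (1 - x) ^ Γ'.card * ((B C T₂).card : ℝ) ≤ ((B C (T₂ ∪ Γ')).card : ℝ) := by
      intro Γ'
      induction Γ' using Finset.induction_on with
      | empty => intro _; simp
      | @insert j Γ'' hjΓ'' ihΓ =>
        intro hsub
        have hjΓ : j ∈ Γ := hsub (Finset.mem_insert_self _ _)
        have hΓ''sub : Γ'' ⊆ Γ := fun y hy => hsub (Finset.mem_insert_of_mem hy)
        have hjT : j ∈ T := hΓsub hjΓ
        have hjS : j ∉ T₂ ∪ Γ'' := by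
          simp only [Finset.mem_union]
          rintro (h | h)
          · exact (Finset.mem_sdiff.mp h).2 hjΓ
          · exact hjΓ'' h
        have hScard : (T₂ ∪ Γ'').card < t := by
          have hsubT : T₂ ∪ Γ'' ⊆ T := Finset.union_subset hT₂sub (hΓ''sub.trans hΓsub)
          have hss : (T₂ ∪ Γ'') ⊂ T :=
            (Finset.ssubset_iff_of_subset hsubT).mpr ⟨j, hjT, hjS⟩
          exact lt_of_lt_of_le (Finset.card_lt_card hss) hTt
        have hih := ih _ hScard (T₂ ∪ Γ'') le_rfl j hjS
        have hcard := B_insert_card C j (T₂ ∪ Γ'')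
        have hre : T₂ ∪ insert j Γ'' = insert j (T₂ ∪ Γ'') := by
          rw [Finset.union_insert]
        rw [hre, hcard, Finset.card_insert_of_notMem hjΓ'', pow_succ]
        have hchain := ihΓ hΓ''sub
        nlinarith [(Nat.cast_nonneg (B C (T₂ ∪ Γ'')).card : (0:ℝ) ≤ _),
          (Nat.cast_nonneg (B C T₂).card : (0:ℝ) ≤ _), pow_nonneg hx01 Γ''.card]
    have hBTsub : B C T ⊆ B C T₂ := by
      intro a ha
      rw [mem_B] at ha ⊢
      exact fun j hj => ha j (hT₂sub hj)
    have hnum : (((B C T).filter (sat C k)).card : ℝ)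
        ≤ (((B C T₂).filter (sat C k)).card : ℝ) :=
      Nat.cast_le.mpr (Finset.card_le_card (Finset.filter_subset_filter _ hBTsub))
    have hpeel := peel Γ (Finset.Subset.refl _)
    rw [hunion] at hpeel
    have hBT₂0 : (0:ℝ) ≤ ((B C T₂).card : ℝ) := Nat.cast_nonneg _
    have hpowd : (1 - x) ^ d ≤ (1 - x) ^ Γ.card :=
      pow_le_pow_of_le_one hx01 (by linarith) hΓd
    calc (((B C T).filter (sat C k)).card : ℝ)
        ≤ p * ((B C T₂).card : ℝ) := by rw [← hindepR]; exact hnum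
      _ ≤ (x * (1 - x) ^ d) * ((B C T₂).card : ℝ) :=
          mul_le_mul_of_nonneg_right hpx hBT₂0
      _ ≤ (x * (1 - x) ^ Γ.card) * ((B C T₂).card : ℝ) := by
          apply mul_le_mul_of_nonneg_right _ hBT₂0
          exact mul_le_mul_of_nonneg_left hpowd hx0.le
      _ = x * ((1 - x) ^ Γ.card * ((B C T₂).card : ℝ)) := by ring
      _ ≤ x * ((B C T).card : ℝ) := mul_le_mul_of_nonneg_left hpeel hx0.le
  -- positivity of B T
  have pos : ∀ T : Finset (Fin N), (0:ℝ) < ((B C T).card : ℝ) := by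
    intro T
    induction T using Finset.induction_on with
    | empty =>
      have hBe : B C (∅ : Finset (Fin N)) = Finset.univ := by
        ext a
        simp [mem_B]
      rw [hBe, Finset.card_univ]
      have : Fintype.card (Fin n → Bool) = 2 ^ n := by simp
      rw [this]
      positivity
    | @insert j T hjT ihT =>
      have hk := key T.card T le_rfl j hjT
      rw [B_insert_card C j T]
      nlinarith
  have hpos := pos Finset.univ
  have hcpos : 0 < (B C Finset.univ).card := by exact_mod_cast hpos
  obtain ⟨a, ha⟩ := Finset.card_pos.mp hcpos
  obtain ⟨k, hk⟩ := htaut a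
  exact (mem_B.mp ha) k (Finset.mem_univ k) hk
end
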